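/- For all real numbers a, b, and λ, |(λ² - (a+b)²)/(λ² + (a+b)²)² - (λ² - (a-b)²)/(λ² + (a-b)²)²| ≤ 3·|4ab/((λ² + (a+b)²)(λ² + (a-b)²))|, and moreover this is at most 3·|4ab|/(a² - b²)² = 3·sgn(ab)·(1/(a-b)² - 1/(a+b)²) whenever a² ≠ b². -/
import Mathlib


theorem domination_inequality (a b l : ℝ) (hab : a + b ≠ 0) (hab' : a - b ≠ 0) :
    |(l ^ 2 - (a + b) ^ 2) / (l ^ 2 + (a + b) ^ 2) ^ 2 -
        (l ^ 2 - (a - b) ^ 2) / (l ^ 2 + (a - b) ^ 2) ^ 2| ≤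
      3 * |4 * a * b / ((l ^ 2 + (a + b) ^ 2) * (l ^ 2 + (a - b) ^ 2))| ∧
    (a ^ 2 ≠ b ^ 2 →
      (|(l ^ 2 - (a + b) ^ 2) / (l ^ 2 + (a + b) ^ 2) ^ 2 -
          (l ^ 2 - (a - b) ^ 2) / (l ^ 2 + (a - b) ^ 2) ^ 2| ≤
        3 * |4 * a * b| / (a ^ 2 - b ^ 2) ^ 2 ∧
      (a * b ≠ 0 →
        3 * |4 * a * b| / (a ^ 2 - b ^ 2) ^ 2 =
          3 * Real.sign (a * b) * (1 / (a - b) ^ 2 - 1 / (a + b) ^ 2)))) := by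
  have hP : (0:ℝ) < l ^ 2 + (a + b) ^ 2 := by positivity
  have hQ : (0:ℝ) < l ^ 2 + (a - b) ^ 2 := by positivity
  have hl : (0:ℝ) ≤ l ^ 2 := sq_nonneg l
  have hu : (0:ℝ) < (a + b) ^ 2 := by positivity
  have hv : (0:ℝ) < (a - b) ^ 2 := by positivity
  set N : ℝ := 3 * l ^ 4 + l ^ 2 * ((a + b) ^ 2 + (a - b) ^ 2) - (a + b) ^ 2 * (a - b) ^ 2
    with hN
  have hrewrite : (l ^ 2 - (a + b) ^ 2) / (l ^ 2 + (a + b) ^ 2) ^ 2 -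
      (l ^ 2 - (a - b) ^ 2) / (l ^ 2 + (a - b) ^ 2) ^ 2 =
      (-(4 * a * b) * N) / ((l ^ 2 + (a + b) ^ 2) ^ 2 * (l ^ 2 + (a - b) ^ 2) ^ 2) := by
    field_simp
    ring
  have habs : |(l ^ 2 - (a + b) ^ 2) / (l ^ 2 + (a + b) ^ 2) ^ 2 -
      (l ^ 2 - (a - b) ^ 2) / (l ^ 2 + (a - b) ^ 2) ^ 2| =
      |4 * a * b| * |N| / ((l ^ 2 + (a + b) ^ 2) ^ 2 * (l ^ 2 + (a - b) ^ 2) ^ 2) := by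
    rw [hrewrite, abs_div, abs_mul, abs_neg,
      abs_of_pos (by positivity : (0:ℝ) < (l ^ 2 + (a + b) ^ 2) ^ 2 * (l ^ 2 + (a - b) ^ 2) ^ 2)]
  have hNbound : |N| ≤ 3 * ((l ^ 2 + (a + b) ^ 2) * (l ^ 2 + (a - b) ^ 2)) := by
    rw [abs_le]
    constructor
    · nlinarith [mul_nonneg hl (le_of_lt hu), mul_nonneg hl (le_of_lt hv),
        mul_pos hu hv, sq_nonneg (l^2)]
    · nlinarith [mul_nonneg hl (le_of_lt hu), mul_nonneg hl (le_of_lt hv),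
        mul_pos hu hv, sq_nonneg (l^2)]
  have h1 : |(l ^ 2 - (a + b) ^ 2) / (l ^ 2 + (a + b) ^ 2) ^ 2 -
      (l ^ 2 - (a - b) ^ 2) / (l ^ 2 + (a - b) ^ 2) ^ 2| ≤
      3 * |4 * a * b| / ((l ^ 2 + (a + b) ^ 2) * (l ^ 2 + (a - b) ^ 2)) := by
    rw [habs, div_le_div_iff₀ (by positivity) (by positivity)]
    calc |4 * a * b| * |N| * ((l ^ 2 + (a + b) ^ 2) * (l ^ 2 + (a - b) ^ 2))
        ≤ |4 * a * b| * (3 * ((l ^ 2 + (a + b) ^ 2) * (l ^ 2 + (a - b) ^ 2))) *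
          ((l ^ 2 + (a + b) ^ 2) * (l ^ 2 + (a - b) ^ 2)) := by
          apply mul_le_mul_of_nonneg_right _ (by positivity)
          exact mul_le_mul_of_nonneg_left hNbound (abs_nonneg _)
      _ = 3 * |4 * a * b| * ((l ^ 2 + (a + b) ^ 2) ^ 2 * (l ^ 2 + (a - b) ^ 2) ^ 2) := by ring
  have hrhs : 3 * |4 * a * b / ((l ^ 2 + (a + b) ^ 2) * (l ^ 2 + (a - b) ^ 2))| =
      3 * |4 * a * b| / ((l ^ 2 + (a + b) ^ 2) * (l ^ 2 + (a - b) ^ 2)) := by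
    rw [abs_div, abs_of_pos (by positivity : (0:ℝ) <
      (l ^ 2 + (a + b) ^ 2) * (l ^ 2 + (a - b) ^ 2))]
    ring
  refine ⟨by rw [hrhs]; exact h1, fun hne => ?_⟩
  have h2pos : (0:ℝ) < (a ^ 2 - b ^ 2) ^ 2 :=
    (sq_nonneg _).lt_of_ne (fun h => hne (by nlinarith)) 
  refine ⟨?_, fun hne2 => ?_⟩
  · refine h1.trans ?_
    apply div_le_div_of_nonneg_left (by positivity) h2pos
    nlinarith [mul_nonneg hl (le_of_lt hu), mul_nonneg hl (le_of_lt hv), sq_nonneg (l^2),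
      sq_nonneg (a+b), sq_nonneg (a-b)]
  · have hsign : Real.sign (a * b) * (4 * a * b) = |4 * a * b| := by
      rcases lt_or_gt_of_ne hne2 with h | h
      · rw [Real.sign_of_neg h, abs_of_neg (by linarith)]; ring
      · rw [Real.sign_of_pos h, abs_of_pos (by linarith)]; ring
    have h2 : (a ^ 2 - b ^ 2) ^ 2 ≠ 0 := ne_of_gt h2pos
    rw [← hsign]
    field_simp
    ring
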